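/- Let N = m+n for positive integers m, n, let C = diag(𝟙ₘ, −𝟙ₙ) and 𝓔 = diag(ε₁,…,ε_N) with εₚ ∈ {+1,−1}. Let μ_j = i ρ_j with ρ₁,…,ρ_r nonzero real numbers of pairwise distinct absolute values, and let B₁,…,B_r ∈ M_N(ℂ). Define g(λ) = 𝟙 + Σ_{j=1}^r (λ/μ_j)(B_j/(λ−μ_j) + C B_j C/(λ+μ_j)), ĝ(λ) = 𝓔 g(conj(λ))† 𝓔, and for each i set Ω_i = 𝟙 + Σ_{j≠i} μ_i B_j/(μ_j(μ_i − μ_j)) + Σ_{j=1}^r μ_i C B_j C/(μ_j(μ_i + μ_j)). If g(λ) ĝ(λ) = 𝟙 for every λ ∈ ℂ outside the pole set {±μ_j}, then for every i = 1,…,r both B_i 𝓔 C B_i† = 0 and B_i 𝓔 C Ω_i† C 𝓔 = Ω_i 𝓔 C B_i† C 𝓔 hold. -/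

import Mathlib

noncomputable section

open Matrix Filter Topology

private lemma aux_neBot {S : Set ℂ} (hS : S.Finite) (x : ℂ) : (𝓝[Sᶜ] x).NeBot := by
  have h1 : (S \ {x})ᶜ ∈ 𝓝 x :=
    ((hS.subset Set.diff_subset).isClosed.isOpen_compl).mem_nhds (by simp)
  have h2 : 𝓝[{x}ᶜ] x = 𝓝[{x}ᶜ ∩ (S \ {x})ᶜ] x := nhdsWithin_restrict' _ h1
  have h3 : {x}ᶜ ∩ (S \ {x})ᶜ ⊆ Sᶜ := by
    rintro y ⟨hy1, hy2⟩ hyS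
    exact hy2 ⟨hyS, hy1⟩
  have h4 : (𝓝[{x}ᶜ ∩ (S \ {x})ᶜ] x).NeBot := by
    rw [← h2]; infer_instance
  exact h4.mono (nhdsWithin_mono x h3)

private lemma aux_eq_at {X : Type*} [TopologicalSpace X] [T2Space X]
    {f : ℂ → X} {z : X} {x : ℂ} {T : Set ℂ}
    (hne : (𝓝[T] x).NeBot) (hf : ContinuousAt f x) (h0 : ∀ y ∈ T, f y = z) : f x = z := by
  haveI := hne
  have h1 : Tendsto f (𝓝[T] x) (𝓝 (f x)) := hf.continuousWithinAt.tendsto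
  have h2 : Tendsto f (𝓝[T] x) (𝓝 z) := by
    refine Tendsto.congr' ?_ tendsto_const_nhds
    filter_upwards [self_mem_nhdsWithin] with y hy using (h0 y hy).symm
  exact tendsto_nhds_unique h1 h2

private lemma expand1 {A : Type*} [Ring A] [Algebra ℂ A] (p : ℂ) (hp : p ≠ 0) (Bm K G H : A) :
    p ^ 2 • ((p⁻¹ • Bm + G) * (-(p⁻¹ • K) + H) - 1)
      = -(Bm * K) + p • (Bm * H - G * K) + p ^ 2 • (G * H - 1) := by
  have hp1 : p * p⁻¹ = 1 := mul_inv_cancel₀ hp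
  have e1 : p • (p⁻¹ • Bm + G) = Bm + p • G := by
    rw [smul_add, smul_smul, hp1, one_smul]
  have e2 : p • (-(p⁻¹ • K) + H) = -K + p • H := by
    rw [smul_add, smul_neg, smul_smul, hp1, one_smul]
  have e3 : p ^ 2 • ((p⁻¹ • Bm + G) * (-(p⁻¹ • K) + H))
      = (Bm + p • G) * (-K + p • H) := by
    rw [← e1, ← e2, smul_mul_smul_comm, ← pow_two]
  rw [smul_sub, e3]
  simp only [mul_add, add_mul, mul_neg, neg_mul, smul_mul_assoc, mul_smul_comm, smul_smul,
    smul_sub, smul_add, pow_two, smul_neg]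
  abel

private lemma expand2 {A : Type*} [Ring A] [Algebra ℂ A] (p : ℂ) (hp : p ≠ 0) (Bm K G H : A)
    (hBK : Bm * K = 0) :
    p • ((p⁻¹ • Bm + G) * (-(p⁻¹ • K) + H) - 1) = (Bm * H - G * K) + p • (G * H - 1) := by
  have hp1 : p * p⁻¹ = 1 := mul_inv_cancel₀ hp
  have e1 : p • (p⁻¹ • Bm + G) = Bm + p • G := by
    rw [smul_add, smul_smul, hp1, one_smul]
  have e3 : p • ((p⁻¹ • Bm + G) * (-(p⁻¹ • K) + H)) = (Bm + p • G) * (-(p⁻¹ • K) + H) := by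
    rw [← smul_mul_assoc, e1]
  rw [smul_sub, e3]
  simp only [mul_add, add_mul, mul_neg, neg_mul, smul_mul_assoc, mul_smul_comm, smul_smul,
    hp1, inv_mul_cancel₀ hp, one_smul, hBK, smul_zero, neg_zero, zero_add, smul_sub]
  abel

/-- The Cartan involution matrix `C = diag(𝟙ₘ, -𝟙ₙ)`. -/
def Cmat (m n : ℕ) : Matrix (Fin m ⊕ Fin n) (Fin m ⊕ Fin n) ℂ :=
  Matrix.fromBlocks 1 0 0 (-1)

/-- The signature matrix `𝓔 = diag(ε₁,…,ε_N)`. -/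
def Emat {m n : ℕ} (ε : Fin m ⊕ Fin n → ℝ) : Matrix (Fin m ⊕ Fin n) (Fin m ⊕ Fin n) ℂ :=
  Matrix.diagonal fun p => (ε p : ℂ)

/-- The regular part `Ωᵢ = 𝟙 + Σ_{j≠i} μᵢBⱼ/(μⱼ(μᵢ-μⱼ)) + Σⱼ μᵢCBⱼC/(μⱼ(μᵢ+μⱼ))`
associated to the pole `μᵢ` of the dressing factor. -/
def Omega {m n r : ℕ} (μ : Fin r → ℂ) (B : Fin r → Matrix (Fin m ⊕ Fin n) (Fin m ⊕ Fin n) ℂ)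
    (i : Fin r) : Matrix (Fin m ⊕ Fin n) (Fin m ⊕ Fin n) ℂ :=
  1 + ∑ j ∈ Finset.univ.erase i, (μ i / (μ j * (μ i - μ j))) • B j
    + ∑ j, (μ i / (μ j * (μ i + μ j))) • (Cmat m n * B j * Cmat m n)

set_option maxHeartbeats 1000000 in
/-- Degenerate case, imaginary poles `μⱼ = iρⱼ`: the double- and simple-pole
coefficients of `g ĝ = 𝟙` at `λ = μᵢ` give `Bᵢ 𝓔 C Bᵢ† = 0` and
`Bᵢ 𝓔 C Ωᵢ† C 𝓔 = Ωᵢ 𝓔 C Bᵢ† C 𝓔`. -/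
theorem imaginary_pole_relations {m n r : ℕ} (hm : 0 < m) (hn : 0 < n) (hr : 0 < r)
    (ε : Fin m ⊕ Fin n → ℝ) (hε : ∀ p, ε p = 1 ∨ ε p = -1)
    (ρ : Fin r → ℝ) (hρ0 : ∀ j, ρ j ≠ 0)
    (hdist : ∀ i j, |ρ i| = |ρ j| → i = j)
    (μ : Fin r → ℂ) (hμ : ∀ j, μ j = Complex.I * (ρ j : ℂ))
    (B : Fin r → Matrix (Fin m ⊕ Fin n) (Fin m ⊕ Fin n) ℂ)
    (g : ℂ → Matrix (Fin m ⊕ Fin n) (Fin m ⊕ Fin n) ℂ)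
    (hg : ∀ lam, g lam = 1 + ∑ j, (lam / μ j) •
        ((lam - μ j)⁻¹ • B j + (lam + μ j)⁻¹ • (Cmat m n * B j * Cmat m n)))
    (hunit : ∀ lam : ℂ, (∀ j, lam ≠ μ j ∧ lam ≠ -μ j) →
      g lam * (Emat ε * (g (starRingEnd ℂ lam))ᴴ * Emat ε) = 1) :
    ∀ i, B i * (Emat ε * Cmat m n) * (B i)ᴴ = 0 ∧
      B i * (Emat ε * Cmat m n) * (Omega μ B i)ᴴ * (Cmat m n * Emat ε)
        = Omega μ B i * (Emat ε * Cmat m n) * (B i)ᴴ * (Cmat m n * Emat ε) := by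
  intro i
  -- basic matrix facts
  have hCC : Cmat m n * Cmat m n = 1 := by
    simp [Cmat, Matrix.fromBlocks_multiply, ← Matrix.fromBlocks_one]
  have hEE : Emat ε * Emat ε = 1 := by
    rw [Emat, Matrix.diagonal_mul_diagonal]
    have h : (fun p => (ε p : ℂ) * ε p) = fun _ => (1:ℂ) := by
      funext p; rcases hε p with h | h <;> simp [h]
    rw [h, Matrix.diagonal_one]
  have hCH : (Cmat m n)ᴴ = Cmat m n := by
    simp [Cmat, Matrix.fromBlocks_conjTranspose]
  have hEH : (Emat ε)ᴴ = Emat ε := by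
    simp [Emat, Matrix.diagonal_conjTranspose]
  -- scalar facts
  have hμ0 : ∀ j, μ j ≠ 0 := fun j => by
    rw [hμ]; exact mul_ne_zero Complex.I_ne_zero (Complex.ofReal_ne_zero.2 (hρ0 j))
  have hconj : ∀ j, (starRingEnd ℂ) (μ j) = -μ j := fun j => by
    rw [hμ]; simp [Complex.conj_I, Complex.conj_ofReal]
  have hinj : ∀ j k, μ j = μ k → j = k := fun j k h => by
    rw [hμ, hμ] at h
    have h2 : (ρ j : ℂ) = (ρ k : ℂ) := mul_left_cancel₀ Complex.I_ne_zero h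
    exact hdist j k (by rw [Complex.ofReal_inj.mp h2])
  have hadd : ∀ j k, μ j + μ k ≠ 0 := fun j k h => by
    rw [hμ, hμ, ← mul_add, mul_eq_zero] at h
    rcases h with h | h
    · exact Complex.I_ne_zero h
    · have h3 : ρ j + ρ k = 0 := by exact_mod_cast h
      have hjk : j = k := hdist j k (by rw [abs_eq_abs]; right; linarith)
      rw [hjk] at h3
      exact hρ0 k (by linarith)
  have hsub : ∀ j, j ∈ Finset.univ.erase i → μ i - μ j ≠ 0 := fun j hj =>
    sub_ne_zero.mpr fun h => (Finset.ne_of_mem_erase hj) (hinj j i h.symm)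
  -- the set where the unitarity relation holds
  set T : Set ℂ := {lam : ℂ | ∀ j, lam ≠ μ j ∧ lam ≠ -μ j} with hT
  have hTne : (𝓝[T] (μ i)).NeBot := by
    have hS : (Set.range μ ∪ Set.range (fun j => -μ j)).Finite :=
      (Set.finite_range μ).union (Set.finite_range _)
    refine (aux_neBot hS (μ i)).mono (nhdsWithin_mono _ ?_)
    intro lam hlam j
    constructor
    · exact fun h => hlam (Or.inl ⟨j, h.symm⟩)
    · exact fun h => hlam (Or.inr ⟨j, h.symm⟩)
  -- abbreviations
  set E := Emat ε with hE
  set C := Cmat m n with hCdef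
  set K := E * (C * (B i)ᴴ * C) * E with hK
  set Gf : ℂ → Matrix (Fin m ⊕ Fin n) (Fin m ⊕ Fin n) ℂ := fun lam =>
    1 + ∑ j ∈ Finset.univ.erase i, (lam / μ j) • ((lam - μ j)⁻¹ • B j)
      + ∑ j, (lam / μ j) • ((lam + μ j)⁻¹ • (C * B j * C)) + (μ i)⁻¹ • B i with hGf
  set Hf : ℂ → Matrix (Fin m ⊕ Fin n) (Fin m ⊕ Fin n) ℂ := fun lam =>
    E * ((1 : Matrix (Fin m ⊕ Fin n) (Fin m ⊕ Fin n) ℂ)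
      - ∑ j, (lam / μ j) • ((lam + μ j)⁻¹ • (B j)ᴴ)
      - ∑ j ∈ Finset.univ.erase i, (lam / μ j) • ((lam - μ j)⁻¹ • (C * (B j)ᴴ * C))
      - (μ i)⁻¹ • (C * (B i)ᴴ * C)) * E with hHf
  have claimA : ∀ lam : ℂ, lam ≠ μ i → g lam = (lam - μ i)⁻¹ • B i + Gf lam := by
    intro lam hlam
    have hp : lam - μ i ≠ 0 := sub_ne_zero.mpr hlam
    have hμi := hμ0 i
    have hsplit : (lam / μ i) • ((lam - μ i)⁻¹ • B i)
        = (lam - μ i)⁻¹ • B i + (μ i)⁻¹ • B i := by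
      rw [smul_smul, ← add_smul]
      congr 1
      rw [inv_add_inv hp hμi, sub_add_cancel, ← div_eq_mul_inv, div_div,
        mul_comm (μ i) (lam - μ i)]
    rw [hg]
    simp only [smul_add]
    rw [Finset.sum_add_distrib,
      ← Finset.add_sum_erase Finset.univ
        (fun j => (lam / μ j) • ((lam - μ j)⁻¹ • B j)) (Finset.mem_univ i),
      hsplit]
    simp only [hGf]
    abel
  have claimB : ∀ lam : ℂ, lam ≠ μ i →
      E * (g ((starRingEnd ℂ) lam))ᴴ * E = -((lam - μ i)⁻¹ • K) + Hf lam := by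
    intro lam hlam
    have hp : lam - μ i ≠ 0 := sub_ne_zero.mpr hlam
    have hμi := hμ0 i
    have st1 : ∀ j, star ((starRingEnd ℂ) lam / μ j) = -(lam / μ j) := fun j => by
      rw [← starRingEnd_apply, map_div₀, Complex.conj_conj, hconj j, div_neg]
    have st2 : ∀ j, star (((starRingEnd ℂ) lam - μ j)⁻¹) = (lam + μ j)⁻¹ := fun j => by
      rw [← starRingEnd_apply, map_inv₀, _root_.map_sub, Complex.conj_conj, hconj j,
        sub_neg_eq_add]
    have st3 : ∀ j, star (((starRingEnd ℂ) lam + μ j)⁻¹) = (lam - μ j)⁻¹ := fun j => by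
      rw [← starRingEnd_apply, map_inv₀, _root_.map_add, Complex.conj_conj, hconj j,
        ← sub_eq_add_neg]
    have hgc : (g ((starRingEnd ℂ) lam))ᴴ
        = 1 + ∑ j, (-(lam / μ j)) • ((lam + μ j)⁻¹ • (B j)ᴴ
            + (lam - μ j)⁻¹ • (C * (B j)ᴴ * C)) := by
      rw [hg]
      rw [conjTranspose_add, conjTranspose_one, conjTranspose_sum]
      congr 1
      refine Finset.sum_congr rfl fun j _ => ?_
      rw [conjTranspose_smul, conjTranspose_add, conjTranspose_smul, conjTranspose_smul,
        conjTranspose_mul, conjTranspose_mul, hCH]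
      rw [st1, st2, st3, mul_assoc]
    have hsplit2 : (-(lam / μ i)) • ((lam - μ i)⁻¹ • (C * (B i)ᴴ * C))
        = -((lam - μ i)⁻¹ • (C * (B i)ᴴ * C)) + -((μ i)⁻¹ • (C * (B i)ᴴ * C)) := by
      rw [smul_smul, ← neg_smul, ← neg_smul, ← add_smul]
      congr 1
      field_simp
      ring
    have hinner : (g ((starRingEnd ℂ) lam))ᴴ
        = -((lam - μ i)⁻¹ • (C * (B i)ᴴ * C)) +
          ((1 : Matrix (Fin m ⊕ Fin n) (Fin m ⊕ Fin n) ℂ)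
            - ∑ j, (lam / μ j) • ((lam + μ j)⁻¹ • (B j)ᴴ)
            - ∑ j ∈ Finset.univ.erase i, (lam / μ j) • ((lam - μ j)⁻¹ • (C * (B j)ᴴ * C))
            - (μ i)⁻¹ • (C * (B i)ᴴ * C)) := by
      rw [hgc]
      simp only [smul_add]
      rw [Finset.sum_add_distrib,
        ← Finset.add_sum_erase Finset.univ
          (fun j => (-(lam / μ j)) • ((lam - μ j)⁻¹ • (C * (B j)ᴴ * C))) (Finset.mem_univ i),
        hsplit2]
      simp only [neg_smul, Finset.sum_neg_distrib]
      abel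
    rw [hinner, mul_add, add_mul, mul_neg, neg_mul, mul_smul_comm, smul_mul_assoc, hHf, hK]
  have hGcont : ContinuousAt Gf (μ i) := by
    rw [hGf]
    refine ContinuousAt.add (ContinuousAt.add (ContinuousAt.add continuousAt_const ?_) ?_)
      continuousAt_const
    · exact tendsto_finset_sum _ fun j hj =>
        ((continuousAt_id.div continuousAt_const (hμ0 j)).smul
          (((continuousAt_id.sub continuousAt_const).inv₀ (hsub j hj)).smul continuousAt_const))
    · exact tendsto_finset_sum _ fun j _ =>
        ((continuousAt_id.div continuousAt_const (hμ0 j)).smul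
          (((continuousAt_id.add continuousAt_const).inv₀ (hadd i j)).smul continuousAt_const))
  have hHcont : ContinuousAt Hf (μ i) := by
    rw [hHf]
    refine (continuousAt_const.mul (ContinuousAt.sub (ContinuousAt.sub
      (ContinuousAt.sub continuousAt_const ?_) ?_) continuousAt_const)).mul continuousAt_const
    · exact tendsto_finset_sum _ fun j _ =>
        ((continuousAt_id.div continuousAt_const (hμ0 j)).smul
          (((continuousAt_id.add continuousAt_const).inv₀ (hadd i j)).smul continuousAt_const))
    · exact tendsto_finset_sum _ fun j hj =>
        ((continuousAt_id.div continuousAt_const (hμ0 j)).smul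
          (((continuousAt_id.sub continuousAt_const).inv₀ (hsub j hj)).smul continuousAt_const))
  have hTsub : ∀ lam ∈ T, lam ≠ μ i := fun lam hlam => (hlam i).1
  -- double pole coefficient
  have hBK : B i * K = 0 := by
    set Φ : ℂ → Matrix (Fin m ⊕ Fin n) (Fin m ⊕ Fin n) ℂ := fun lam =>
      -(B i * K) + (lam - μ i) • (B i * Hf lam - Gf lam * K)
        + (lam - μ i) ^ 2 • (Gf lam * Hf lam - 1) with hΦ
    have hΦ0 : ∀ lam ∈ T, Φ lam = 0 := by
      intro lam hlam
      have hne : lam ≠ μ i := hTsub lam hlam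
      have hp : lam - μ i ≠ 0 := sub_ne_zero.mpr hne
      have := expand1 (lam - μ i) hp (B i) K (Gf lam) (Hf lam)
      rw [hΦ]
      simp only [← this, ← claimA lam hne, ← claimB lam hne, hunit lam hlam, sub_self,
        smul_zero]
    have hΦc : ContinuousAt Φ (μ i) := by
      rw [hΦ]
      refine ContinuousAt.add (ContinuousAt.add continuousAt_const ?_) ?_
      · exact (continuousAt_id.sub continuousAt_const).smul
          ((continuousAt_const.mul hHcont).sub (hGcont.mul continuousAt_const))
      · exact ((continuousAt_id.sub continuousAt_const).pow 2).smul
          ((hGcont.mul hHcont).sub continuousAt_const)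
    have := aux_eq_at hTne hΦc hΦ0
    rw [hΦ] at this
    simpa using this
  constructor
  · -- first relation
    have h2 : B i * K * (E * C) = 0 := by rw [hBK, zero_mul]
    rw [hK] at h2
    simp only [mul_assoc] at h2
    rw [← mul_assoc E E C, hEE, one_mul, hCC, mul_one] at h2
    simp only [mul_assoc]
    exact h2
  · -- second relation
    have hBH : B i * Hf (μ i) = Gf (μ i) * K := by
      set Ψ : ℂ → Matrix (Fin m ⊕ Fin n) (Fin m ⊕ Fin n) ℂ := fun lam =>
        (B i * Hf lam - Gf lam * K) + (lam - μ i) • (Gf lam * Hf lam - 1) with hΨ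
      have hΨ0 : ∀ lam ∈ T, Ψ lam = 0 := by
        intro lam hlam
        have hne : lam ≠ μ i := hTsub lam hlam
        have hp : lam - μ i ≠ 0 := sub_ne_zero.mpr hne
        have := expand2 (lam - μ i) hp (B i) K (Gf lam) (Hf lam) hBK
        rw [hΨ]
        simp only [← this, ← claimA lam hne, ← claimB lam hne, hunit lam hlam, sub_self,
          smul_zero]
      have hΨc : ContinuousAt Ψ (μ i) := by
        rw [hΨ]
        exact ((continuousAt_const.mul hHcont).sub (hGcont.mul continuousAt_const)).add
          ((continuousAt_id.sub continuousAt_const).smul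
            ((hGcont.mul hHcont).sub continuousAt_const))
      have := aux_eq_at hTne hΨc hΨ0
      rw [hΨ] at this
      simp only [sub_self, zero_smul, add_zero] at this
      exact sub_eq_zero.mp this
    -- evaluate Gf and Hf at μ i
    have e1 : ∀ j : Fin r, (μ i / μ j) • ((μ i + μ j)⁻¹ • (C * B j * C))
        = (μ i / (μ j * (μ i + μ j))) • (C * B j * C) := fun j => by
      rw [smul_smul, ← div_eq_mul_inv, div_div]
    have e2 : ∀ j : Fin r, (μ i / μ j) • ((μ i - μ j)⁻¹ • B j)
        = (μ i / (μ j * (μ i - μ j))) • B j := fun j => by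
      rw [smul_smul, ← div_eq_mul_inv, div_div]
    have hGval : Gf (μ i) = Omega μ B i + (μ i)⁻¹ • B i := by
      simp only [hGf, Omega, e1, e2, ← hCdef]
    have hstar1 : ∀ j, (starRingEnd ℂ) (μ i / (μ j * (μ i - μ j)))
        = -(μ i / (μ j * (μ i - μ j))) := fun j => by
      have e : (-(μ j)) * (-(μ i) - -(μ j)) = μ j * (μ i - μ j) := by ring
      simp only [map_div₀, _root_.map_mul, _root_.map_sub, hconj]
      rw [e, neg_div]
    have hstar2 : ∀ j, (starRingEnd ℂ) (μ i / (μ j * (μ i + μ j)))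
        = -(μ i / (μ j * (μ i + μ j))) := fun j => by
      have e : (-(μ j)) * (-(μ i) + -(μ j)) = μ j * (μ i + μ j) := by ring
      simp only [map_div₀, _root_.map_mul, _root_.map_add, hconj]
      rw [e, neg_div]
    have hCC2 : ∀ X : Matrix (Fin m ⊕ Fin n) (Fin m ⊕ Fin n) ℂ, C * (C * X) = X := fun X => by
      rw [← mul_assoc, hCC, one_mul]
    have hOmegaH : C * (Omega μ B i)ᴴ * C
        = 1 - ∑ j ∈ Finset.univ.erase i, (μ i / (μ j * (μ i - μ j))) • (C * (B j)ᴴ * C)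
            - ∑ j, (μ i / (μ j * (μ i + μ j))) • (B j)ᴴ := by
      rw [Omega, ← hCdef]
      simp only [starRingEnd_apply] at hstar1 hstar2
      simp only [conjTranspose_add, conjTranspose_one, conjTranspose_sum, conjTranspose_smul,
        conjTranspose_mul, hCH, hstar1, hstar2]
      simp only [mul_add, add_mul, mul_one, one_mul, Finset.mul_sum, Finset.sum_mul,
        mul_smul_comm, smul_mul_assoc, neg_smul, Finset.sum_neg_distrib, mul_neg, neg_mul,
        mul_assoc, hCC, mul_one, hCC2]
      abel
    have hHval : Hf (μ i) = E * (C * (Omega μ B i)ᴴ * C) * E - (μ i)⁻¹ • K := by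
      rw [hOmegaH, hK]
      have hin : (1 : Matrix (Fin m ⊕ Fin n) (Fin m ⊕ Fin n) ℂ)
          - ∑ j, (μ i / μ j) • ((μ i + μ j)⁻¹ • (B j)ᴴ)
          - ∑ j ∈ Finset.univ.erase i, (μ i / μ j) • ((μ i - μ j)⁻¹ • (C * (B j)ᴴ * C))
          - (μ i)⁻¹ • (C * (B i)ᴴ * C)
          = (1 - ∑ j ∈ Finset.univ.erase i, (μ i / (μ j * (μ i - μ j))) • (C * (B j)ᴴ * C)
              - ∑ j, (μ i / (μ j * (μ i + μ j))) • (B j)ᴴ)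
            - (μ i)⁻¹ • (C * (B i)ᴴ * C) := by
        have e1' : ∀ j : Fin r, (μ i / μ j) • ((μ i + μ j)⁻¹ • (B j)ᴴ)
            = (μ i / (μ j * (μ i + μ j))) • (B j)ᴴ := fun j => by
          rw [smul_smul, ← div_eq_mul_inv, div_div]
        have e2' : ∀ j : Fin r, (μ i / μ j) • ((μ i - μ j)⁻¹ • (C * (B j)ᴴ * C))
            = (μ i / (μ j * (μ i - μ j))) • (C * (B j)ᴴ * C) := fun j => by
          rw [smul_smul, ← div_eq_mul_inv, div_div]
        simp only [e1', e2']
        abel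
      simp only [hHf]
      rw [hin, mul_sub, sub_mul, mul_smul_comm, smul_mul_assoc]
    -- conclude
    have main : B i * (E * (C * (Omega μ B i)ᴴ * C) * E) = Omega μ B i * K := by
      have l1 : B i * Hf (μ i) = B i * (E * (C * (Omega μ B i)ᴴ * C) * E) := by
        rw [hHval, mul_sub, mul_smul_comm, hBK, smul_zero, sub_zero]
      have l2 : Gf (μ i) * K = Omega μ B i * K := by
        rw [hGval, add_mul, smul_mul_assoc, hBK, smul_zero, add_zero]
      rw [← l1, ← l2]
      exact hBH
    rw [hK] at main
    simp only [mul_assoc] at main ⊢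
    exact main
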